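/- Let Pol be an assignment of weakly monotonic multilinear polynomials over ℕ to function symbols, extended homomorphically to terms. If s rewrites to the multi-distribution {p₁:t₁,...,p_k:t_k} by applying a probabilistic rule ℓ → {p₁:r₁,...,p_k:r_k} at some position π (so s|_π = ℓσ and t_j = s[r_jσ]_π), and if Pol(ℓ) ≥ Σ_j p_j·Pol(r_j) holds for all variable instantiations, then Pol(s) ≥ Σ_j p_j·Pol(t_j). -/

import Mathlib

/-- First-order terms over a signature `F` with arities `ar`. -/
inductive PTerm (F : Type) (ar : F → ℕ) : Type where
  | var : ℕ → PTerm F ar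
  | app : (f : F) → (Fin (ar f) → PTerm F ar) → PTerm F ar

namespace PTerm

/-- Homomorphic extension of an interpretation `Pol` of the function symbols
to terms, under a variable assignment `α`. -/
noncomputable def eval {F : Type} {ar : F → ℕ}
    (Pol : (f : F) → (Fin (ar f) → ℝ) → ℝ) (α : ℕ → ℝ) : PTerm F ar → ℝ
  | var n => α n
  | app f ts => Pol f (fun i => eval Pol α (ts i))

/-- Application of a substitution to a term. -/
def subst {F : Type} {ar : F → ℕ} (σ : ℕ → PTerm F ar) :
    PTerm F ar → PTerm F ar
  | var n => σ n
  | app f ts => app f (fun i => subst σ (ts i))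

/-- `RewriteAt u v s t` means that `s` contains `u` at some position `π` and
each `t j` is obtained from `s` by replacing `u` at that same position by
`v j`. -/
inductive RewriteAt {F : Type} {ar : F → ℕ} {k : ℕ}
    (u : PTerm F ar) (v : Fin k → PTerm F ar) :
    PTerm F ar → (Fin k → PTerm F ar) → Prop
  | root : RewriteAt u v u v
  | congr (f : F) (ts : Fin (ar f) → PTerm F ar) (i : Fin (ar f))
      (ti' : Fin k → PTerm F ar) :
      RewriteAt u v (ts i) ti' →
      RewriteAt u v (app f ts)
        (fun j => app f (Function.update ts i (ti' j)))

end PTerm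

section Aux

open PTerm

lemma eval_subst' {F : Type} {ar : F → ℕ}
    (Pol : (f : F) → (Fin (ar f) → ℝ) → ℝ) (β : ℕ → ℝ) (σ : ℕ → PTerm F ar) :
    ∀ t : PTerm F ar,
      eval Pol β (subst σ t) = eval Pol (fun n => eval Pol β (σ n)) t := by
  intro t
  induction t with
  | var n => rfl
  | app f ts ih =>
      simp only [subst, eval]
      congr 1
      funext i
      exact ih i

lemma eval_nat' {F : Type} {ar : F → ℕ}
    (Pol : (f : F) → (Fin (ar f) → ℝ) → ℝ)
    (hml : ∀ f : F, ∃ c : Finset (Fin (ar f)) → ℕ,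
      ∀ x : Fin (ar f) → ℝ,
        Pol f x = ∑ S : Finset (Fin (ar f)), (c S : ℝ) * ∏ i ∈ S, x i)
    (α : ℕ → ℕ) : ∀ t : PTerm F ar, ∃ m : ℕ,
      eval Pol (fun n => ((α n : ℕ) : ℝ)) t = (m : ℝ) := by
  intro t
  induction t with
  | var n => exact ⟨α n, rfl⟩
  | app f ts ih =>
      choose g hg using ih
      obtain ⟨c, hc⟩ := hml f
      refine ⟨∑ S : Finset (Fin (ar f)), c S * ∏ i ∈ S, g i, ?_⟩
      have : (fun i => eval Pol (fun n => ((α n : ℕ) : ℝ)) (ts i))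
          = fun i => ((g i : ℕ) : ℝ) := funext hg
      simp only [eval, this, hc]
      push_cast
      rfl

lemma affine' {F : Type} {ar : F → ℕ}
    (Pol : (f : F) → (Fin (ar f) → ℝ) → ℝ)
    (hml : ∀ f : F, ∃ c : Finset (Fin (ar f)) → ℕ,
      ∀ x : Fin (ar f) → ℝ,
        Pol f x = ∑ S : Finset (Fin (ar f)), (c S : ℝ) * ∏ i ∈ S, x i)
    (f : F) (x : Fin (ar f) → ℝ) (hx : ∀ i, 0 ≤ x i) (i : Fin (ar f)) :
    ∃ A B : ℝ, 0 ≤ B ∧ ∀ a : ℝ, Pol f (Function.update x i a) = A + B * a := by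
  obtain ⟨c, hc⟩ := hml f
  refine ⟨∑ S ∈ Finset.univ.filter (fun S => i ∉ S), (c S : ℝ) * ∏ j ∈ S, x j,
          ∑ S ∈ Finset.univ.filter (fun S => i ∈ S), (c S : ℝ) * ∏ j ∈ S.erase i, x j,
          ?_, ?_⟩
  · apply Finset.sum_nonneg
    intro S _
    exact mul_nonneg (Nat.cast_nonneg _) (Finset.prod_nonneg fun j _ => hx j)
  · intro a
    rw [hc, ← Finset.sum_filter_add_sum_filter_not Finset.univ (fun S => i ∈ S)]
    have h1 : ∀ S ∈ Finset.univ.filter (fun S => i ∈ S),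
        (c S : ℝ) * ∏ j ∈ S, Function.update x i a j
          = ((c S : ℝ) * ∏ j ∈ S.erase i, x j) * a := by
      intro S hS
      simp only [Finset.mem_filter] at hS
      rw [← Finset.mul_prod_erase _ _ hS.2, Function.update_self,
        Finset.prod_congr rfl
          (fun j hj => Function.update_of_ne (Finset.ne_of_mem_erase hj) a x)]
      ring
    have h2 : ∀ S ∈ Finset.univ.filter (fun S => i ∉ S),
        (c S : ℝ) * ∏ j ∈ S, Function.update x i a j
          = (c S : ℝ) * ∏ j ∈ S, x j := by
      intro S hS
      simp only [Finset.mem_filter] at hS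
      congr 1
      exact Finset.prod_congr rfl
        (fun j hj => Function.update_of_ne (by rintro rfl; exact hS.2 hj) a x)
    rw [Finset.sum_congr rfl h1, Finset.sum_congr rfl h2, ← Finset.sum_mul]
    ring

end Aux

theorem stmt_16 {F : Type} {ar : F → ℕ}
    (Pol : (f : F) → (Fin (ar f) → ℝ) → ℝ)
    -- each `Pol f` is a multilinear polynomial with coefficients in ℕ
    (hml : ∀ f : F, ∃ c : Finset (Fin (ar f)) → ℕ,
      ∀ x : Fin (ar f) → ℝ,
        Pol f x = ∑ S : Finset (Fin (ar f)), (c S : ℝ) * ∏ i ∈ S, x i)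
    -- each `Pol f` is weakly monotonic (on nonnegative arguments)
    (hmono : ∀ (f : F) (x y : Fin (ar f) → ℝ), (∀ i, 0 ≤ x i) →
      (∀ i, x i ≤ y i) → Pol f x ≤ Pol f y)
    {k : ℕ} (p : Fin k → ℝ) (hp : ∀ j, 0 ≤ p j) (hps : ∑ j, p j = 1)
    (lhs : PTerm F ar) (rhs : Fin k → PTerm F ar) (σ : ℕ → PTerm F ar)
    -- the rule `ℓ → {p₁:r₁,...,p_k:r_k}` is weakly decreasing in expectation
    -- for all natural-number instantiations of the variables
    (hrule : ∀ α : ℕ → ℕ,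
      ∑ j, p j * PTerm.eval Pol (fun n => ((α n : ℕ) : ℝ)) (rhs j) ≤
        PTerm.eval Pol (fun n => ((α n : ℕ) : ℝ)) lhs)
    (s : PTerm F ar) (t : Fin k → PTerm F ar)
    -- `s` rewrites to `{p₁:t₁,...,p_k:t_k}` using the rule at some position
    (hrw : PTerm.RewriteAt (PTerm.subst σ lhs)
      (fun j => PTerm.subst σ (rhs j)) s t) :
    ∀ α : ℕ → ℕ,
      ∑ j, p j * PTerm.eval Pol (fun n => ((α n : ℕ) : ℝ)) (t j) ≤
        PTerm.eval Pol (fun n => ((α n : ℕ) : ℝ)) s := by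
  intro α
  set β : ℕ → ℝ := fun n => ((α n : ℕ) : ℝ) with hβ
  induction hrw with
  | root =>
      choose g hg using fun n => eval_nat' Pol hml α (σ n)
      have hs : ∀ u : PTerm F ar, PTerm.eval Pol β (PTerm.subst σ u)
          = PTerm.eval Pol (fun n => ((g n : ℕ) : ℝ)) u := by
        intro u
        rw [eval_subst']
        congr 1
        funext n
        exact hg n
      simp only [hs]
      exact hrule g
  | congr f ts i ti' hsub ih =>
      set x : Fin (ar f) → ℝ := fun i' => PTerm.eval Pol β (ts i') with hxdef
      have hx : ∀ i', 0 ≤ x i' := by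
        intro i'
        obtain ⟨m, hm⟩ := eval_nat' Pol hml α (ts i')
        simp only [hxdef, hβ, hm]
        positivity
      obtain ⟨A, B, hB, hAB⟩ := affine' Pol hml f x hx i
      have heval : ∀ j, PTerm.eval Pol β (PTerm.app f (Function.update ts i (ti' j)))
          = A + B * PTerm.eval Pol β (ti' j) := by
        intro j
        have hupd : (fun i' => PTerm.eval Pol β (Function.update ts i (ti' j) i'))
            = Function.update x i (PTerm.eval Pol β (ti' j)) := by
          funext i'
          by_cases h : i' = i
          · subst h; simp [Function.update_self, hxdef]
          · simp [Function.update_of_ne h, hxdef]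
        show Pol f (fun i' => PTerm.eval Pol β (Function.update ts i (ti' j) i'))
            = A + B * PTerm.eval Pol β (ti' j)
        rw [hupd, hAB]
      have hrhs : PTerm.eval Pol β (PTerm.app f ts) = A + B * x i := by
        have h := hAB (x i)
        rw [Function.update_eq_self] at h
        exact h
      have key : ∑ j, p j * PTerm.eval Pol β
            (PTerm.app f (Function.update ts i (ti' j)))
          = A + B * ∑ j, p j * PTerm.eval Pol β (ti' j) := by
        simp only [heval]
        have : ∀ j ∈ Finset.univ, p j * (A + B * PTerm.eval Pol β (ti' j))
            = A * p j + B * (p j * PTerm.eval Pol β (ti' j)) := fun j _ => by ring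
        rw [Finset.sum_congr rfl this, Finset.sum_add_distrib,
          ← Finset.mul_sum, ← Finset.mul_sum, hps, mul_one]
      rw [key, hrhs]
      exact (add_le_add_iff_left A).mpr (mul_le_mul_of_nonneg_left ih hB)
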